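/- Let f be a real square matrix such that f^d − Id is invertible for all positive integers d, and suppose all real eigenvalues of f lie in (−∞, −1) ∪ (−1, 1) ∪ (1, ∞). Let m₁ be the number of real eigenvalues of f (with multiplicity) in (−∞, 1), and m₂ the number of real eigenvalues in (−1, 1). Then sign(det(f^d − Id)) = (−1)^{m₁} for all odd d, and sign(det(f^d − Id)) = (−1)^{m₂} for all even d. -/

import Mathlib

open Polynomial Matrix

/-- Sign helper. -/
private lemma aux_sign_eq (m : ℕ) (r : ℝ) (h : 0 < (-1 : ℝ) ^ m * r) :
    Real.sign r = (-1 : ℝ) ^ m := by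
  rcases Nat.even_or_odd m with he | ho
  · rw [he.neg_one_pow] at h ⊢
    rw [one_mul] at h
    rw [Real.sign_of_pos h]
  · rw [ho.neg_one_pow] at h ⊢
    have hr : r < 0 := by nlinarith
    rw [Real.sign_of_neg hr]

/-- Product over a real multiset with signed factors. -/
private lemma aux_pos_prod (cond : ℝ → Prop) [DecidablePred cond] (g : ℝ → ℝ)
    (s : Multiset ℝ) (h : ∀ x ∈ s, if cond x then g x < 0 else 0 < g x) :
    0 < (-1 : ℝ) ^ (Multiset.card (s.filter cond)) * (s.map g).prod := by
  induction s using Multiset.induction_on with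
  | empty => simp
  | cons a s ih =>
    have ha := h a (Multiset.mem_cons_self a s)
    have ih' := ih fun x hx => h x (Multiset.mem_cons_of_mem hx)
    rw [Multiset.map_cons, Multiset.prod_cons]
    by_cases hc : cond a
    · rw [if_pos hc] at ha
      rw [Multiset.filter_cons_of_pos _ hc, Multiset.card_cons]
      have : (-1 : ℝ) ^ (Multiset.card (s.filter cond) + 1) * (g a * (s.map g).prod)
          = (-g a) * ((-1 : ℝ) ^ (Multiset.card (s.filter cond)) * (s.map g).prod) := by
        ring
      rw [this]
      exact mul_pos (by linarith) ih'
    · rw [if_neg hc] at ha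
      rw [Multiset.filter_cons_of_neg _ hc]
      have : (-1 : ℝ) ^ (Multiset.card (s.filter cond)) * (g a * (s.map g).prod)
          = g a * ((-1 : ℝ) ^ (Multiset.card (s.filter cond)) * (s.map g).prod) := by
        ring
      rw [this]
      exact mul_pos ha ih'

/-- Product over a conjugation-invariant multiset of non-real complex numbers is a
positive real. -/
private lemma aux_conj_prod (g : ℂ → ℂ)
    (hg : ∀ μ, g ((starRingEnd ℂ) μ) = (starRingEnd ℂ) (g μ)) :
    ∀ (n : ℕ) (T : Multiset ℂ), Multiset.card T = n →
      T.map (starRingEnd ℂ) = T → (∀ μ ∈ T, (starRingEnd ℂ) μ ≠ μ) →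
      (∀ μ ∈ T, g μ ≠ 0) →
      ∃ c : ℝ, 0 < c ∧ (T.map g).prod = (c : ℂ) := by
  intro n
  induction n using Nat.strong_induction_on with
  | _ n ih =>
    intro T hcard hconj hnr hnz
    rcases Multiset.empty_or_exists_mem T with rfl | ⟨μ, hμ⟩
    · exact ⟨1, one_pos, by simp⟩
    have hμ' : (starRingEnd ℂ) μ ∈ T :=
      hconj ▸ Multiset.mem_map_of_mem _ hμ
    have hne : (starRingEnd ℂ) μ ≠ μ := hnr μ hμ
    have h1 : (starRingEnd ℂ) μ ∈ T.erase μ :=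
      (Multiset.mem_erase_of_ne hne).mpr hμ'
    set T' : Multiset ℂ := (T.erase μ).erase ((starRingEnd ℂ) μ) with hT'def
    have hT : T = μ ::ₘ (starRingEnd ℂ) μ ::ₘ T' := by
      rw [hT'def, Multiset.cons_erase h1, Multiset.cons_erase hμ]
    have hinj : Function.Injective (starRingEnd ℂ) := RingHom.injective _
    have hsub : ∀ x ∈ T', x ∈ T := by
      intro x hx
      exact Multiset.mem_of_mem_erase (Multiset.mem_of_mem_erase hx)
    have hconj' : T'.map (starRingEnd ℂ) = T' := by
      rw [hT'def, Multiset.map_erase _ hinj, Multiset.map_erase _ hinj, hconj,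
        Complex.conj_conj, Multiset.erase_comm]
    have hcard' : Multiset.card T' < n := by
      have h2 : Multiset.card T = Multiset.card T' + 2 := by
        rw [hT]; simp
      omega
    obtain ⟨c, hc, hprod⟩ := ih _ hcard' T' rfl hconj'
      (fun x hx => hnr x (hsub x hx)) (fun x hx => hnz x (hsub x hx))
    refine ⟨Complex.normSq (g μ) * c, mul_pos (Complex.normSq_pos.mpr (hnz μ hμ)) hc, ?_⟩
    rw [hT, Multiset.map_cons, Multiset.map_cons, Multiset.prod_cons, Multiset.prod_cons,
      hprod, hg μ, ← mul_assoc, Complex.mul_conj, ← Complex.ofReal_mul]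

/-- Swap a double multiset product. -/
private lemma aux_prod_comm {α β : Type*} (A : Multiset α) (B : Multiset β) (g : α → β → ℂ) :
    (A.map (fun a => (B.map (g a)).prod)).prod
      = (B.map (fun b => (A.map (fun a => g a b)).prod)).prod := by
  induction A using Multiset.induction_on with
  | empty => simp
  | cons a A ih =>
    simp only [Multiset.map_cons, Multiset.prod_cons, ih, ← Multiset.prod_map_mul]

/-- evaluating the characteristic polynomial. -/
private lemma aux_charpoly_eval {N : ℕ} (g : Matrix (Fin N) (Fin N) ℂ) (ζ : ℂ) :
    g.charpoly.eval ζ = (ζ • (1 : Matrix (Fin N) (Fin N) ℂ) - g).det := by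
  have h : g.charpoly.eval ζ = (Polynomial.evalRingHom ζ) g.charpoly := rfl
  rw [h, Matrix.charpoly, RingHom.map_det]
  congr 1
  ext i j
  by_cases hij : i = j
  · subst hij
    simp [charmatrix_apply_eq, Matrix.smul_apply, Matrix.one_apply]
  · simp [charmatrix_apply_ne _ _ _ hij, hij, Matrix.smul_apply, Matrix.one_apply]

/-- The determinant of `g ^ d - 1` over `ℂ` is the product of `μ ^ d - 1` over the
roots of the characteristic polynomial. -/
private lemma aux_det_pow_sub_one {N : ℕ} (g : Matrix (Fin N) (Fin N) ℂ) (d : ℕ) (hd : 0 < d) :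
    (g ^ d - 1).det = (g.charpoly.roots.map (fun μ => μ ^ d - 1)).prod := by
  classical
  set q : ℂ[X] := X ^ d - C 1 with hq
  have hqmonic : q.Monic := monic_X_pow_sub_C 1 hd.ne'
  have hqdeg : q.natDegree = d := natDegree_X_pow_sub_C
  have hqroots : Multiset.card q.roots = d := by
    rw [← hqdeg]
    exact (splits_iff_card_roots).mp (IsAlgClosed.splits q)
  have hqfact : (q.roots.map fun a => X - C a).prod = q :=
    prod_multiset_X_sub_C_of_monic_of_roots_card_eq hqmonic (by rw [hqroots, hqdeg])
  set p := g.charpoly with hp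
  have hpmonic : p.Monic := g.charpoly_monic
  have hpdeg : p.natDegree = N := by
    rw [hp, g.charpoly_natDegree_eq_dim, Fintype.card_fin]
  have hproots : Multiset.card p.roots = N := by
    rw [← hpdeg]
    exact (splits_iff_card_roots).mp (IsAlgClosed.splits p)
  have hpfact : (p.roots.map fun a => X - C a).prod = p :=
    prod_multiset_X_sub_C_of_monic_of_roots_card_eq hpmonic (by rw [hproots, hpdeg])
  set L : List ℂ := q.roots.toList with hLdef
  have hLcoe : (L : Multiset ℂ) = q.roots := Multiset.coe_toList _
  have hLfact : (L.map fun a => X - C a).prod = q := by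
    rw [← hqfact, ← hLcoe, Multiset.map_coe, Multiset.prod_coe]
  -- step 1 : g ^ d - 1 = ∏_{ζ ∈ L} (g - ζ • 1)
  have hstep1 : g ^ d - 1 = (L.map
      (fun ζ => g - ζ • (1 : Matrix (Fin N) (Fin N) ℂ))).prod := by
    have h1 : g ^ d - 1 = Polynomial.aeval g q := by
      simp [hq, map_sub, map_pow]
    rw [h1, ← hLfact, map_list_prod (Polynomial.aeval g), List.map_map]
    congr 1
    apply List.map_congr_left
    intro ζ _
    simp [Algebra.algebraMap_eq_smul_one]
  -- step 2 : det (g - ζ • 1) = ∏_{μ ∈ p.roots} (μ - ζ)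
  have hstep2 : ∀ ζ : ℂ, (g - ζ • (1 : Matrix (Fin N) (Fin N) ℂ)).det
      = (p.roots.map (fun μ => μ - ζ)).prod := by
    intro ζ
    have h2 : p.eval ζ = (p.roots.map (fun μ => ζ - μ)).prod := by
      conv_lhs => rw [← hpfact]
      rw [← Polynomial.coe_evalRingHom, map_multiset_prod, Multiset.map_map]
      apply congr_arg
      apply Multiset.map_congr rfl
      intro μ _
      simp
    have h3 : (p.roots.map (fun μ => μ - ζ))
        = (p.roots.map (fun μ => ζ - μ)).map Neg.neg := by
      rw [Multiset.map_map]
      apply Multiset.map_congr rfl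
      intro μ _
      simp
    calc (g - ζ • (1 : Matrix (Fin N) (Fin N) ℂ)).det
        = (-(ζ • (1 : Matrix (Fin N) (Fin N) ℂ) - g)).det := by rw [neg_sub]
      _ = (-1 : ℂ) ^ N * (ζ • (1 : Matrix (Fin N) (Fin N) ℂ) - g).det := by
          rw [Matrix.det_neg, Fintype.card_fin]
      _ = (-1 : ℂ) ^ N * (p.roots.map (fun μ => ζ - μ)).prod := by
          rw [← aux_charpoly_eval, ← hp, h2]
      _ = (p.roots.map (fun μ => μ - ζ)).prod := by
          rw [h3, Multiset.prod_map_neg, Multiset.card_map, hproots]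
  -- combine
  have hdet : (g ^ d - 1).det
      = (L.map (fun ζ => (p.roots.map (fun μ => μ - ζ)).prod)).prod := by
    rw [hstep1, ← Matrix.coe_detMonoidHom, map_list_prod (Matrix.detMonoidHom : Matrix (Fin N) (Fin N) ℂ →* ℂ), List.map_map]
    congr 1
    apply List.map_congr_left
    intro ζ _
    simpa [Matrix.coe_detMonoidHom] using hstep2 ζ
  have hdet2 : (g ^ d - 1).det
      = (q.roots.map (fun ζ => (p.roots.map (fun μ => μ - ζ)).prod)).prod := by
    rw [hdet, ← hLcoe, Multiset.map_coe, Multiset.prod_coe]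
  rw [hdet2, aux_prod_comm]
  congr 1
  apply Multiset.map_congr rfl
  intro μ _
  have h4 : (q.roots.map (fun ζ => μ - ζ)).prod = q.eval μ := by
    conv_rhs => rw [← hqfact]
    rw [← Polynomial.coe_evalRingHom, map_multiset_prod, Multiset.map_map]
    apply congr_arg
    apply Multiset.map_congr rfl
    intro ζ _
    simp
  rw [h4, hq]
  simp

open scoped Classical in
/-- If `f^d − Id` is invertible for all positive `d` and no real eigenvalue of `f`
equals `±1`, then with `m₁` the number of real eigenvalues in `(−∞,1)` and `m₂` the
number in `(−1,1)` (with multiplicity), `sign(det(f^d − Id)) = (−1)^{m₁}` for odd `d`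
and `(−1)^{m₂}` for even `d`. -/
theorem stmt_3 (N : ℕ) (f : Matrix (Fin N) (Fin N) ℝ)
    (hinv : ∀ d : ℕ, 0 < d → (f ^ d - 1).det ≠ 0)
    (havoid : ∀ x ∈ f.charpoly.roots, x ≠ 1 ∧ x ≠ -1)
    (m₁ m₂ : ℕ)
    (hm₁ : m₁ = Multiset.card (f.charpoly.roots.filter (fun x => x < 1)))
    (hm₂ : m₂ = Multiset.card (f.charpoly.roots.filter (fun x => -1 < x ∧ x < 1))) :
    ∀ d : ℕ, 0 < d →
      (Odd d → Real.sign ((f ^ d - 1).det) = (-1) ^ m₁) ∧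
      (Even d → Real.sign ((f ^ d - 1).det) = (-1) ^ m₂) := by
  have hofinj : Function.Injective (algebraMap ℝ ℂ) := RingHom.injective _
  classical
  set g : Matrix (Fin N) (Fin N) ℂ := f.map (algebraMap ℝ ℂ) with hgdef
  set S : Multiset ℂ := g.charpoly.roots with hSdef
  set R : Multiset ℂ := f.charpoly.roots.map (algebraMap ℝ ℂ) with hRdef
  have hgcp : g.charpoly = f.charpoly.map (algebraMap ℝ ℂ) := Matrix.charpoly_map f _
  -- conjugation invariance of S
  have hSconj : S.map (starRingEnd ℂ) = S := by
    have hcomp : (starRingEnd ℂ).comp (algebraMap ℝ ℂ) = algebraMap ℝ ℂ := by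
      ext x
      exact Complex.conj_ofReal x
    have h1 : (g.charpoly.map (starRingEnd ℂ)) = g.charpoly := by
      rw [hgcp, Polynomial.map_map, hcomp]
    rw [hSdef, ← (IsAlgClosed.splits g.charpoly).roots_map (starRingEnd ℂ), h1]
  -- decomposition of S into real and non-real parts
  set T : Multiset ℂ := S.filter (fun μ => μ.im ≠ 0) with hTdef
  have hdecomp : S = R + T := by
    ext μ
    rw [Multiset.count_add, hTdef, Multiset.count_filter]
    by_cases him : μ.im = 0
    · have hμ : μ = (algebraMap ℝ ℂ) μ.re := by
        apply Complex.ext <;> simp [him]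
      rw [if_neg (by simp [him]), add_zero, hμ, hRdef,
        Multiset.count_map_eq_count' _ _ hofinj, hSdef, Polynomial.count_roots,
        Polynomial.count_roots, hgcp, ← eq_rootMultiplicity_map hofinj]
    · rw [if_pos him]
      have h0 : Multiset.count μ R = 0 := by
        rw [Multiset.count_eq_zero]
        intro hmem
        obtain ⟨x, -, hx⟩ := Multiset.mem_map.mp hmem
        apply him
        rw [← hx]
        simp
      rw [h0, zero_add]
  have hTconj : T.map (starRingEnd ℂ) = T := by
    have hPcomp : S.filter (fun μ => μ.im ≠ 0)
        = S.filter ((fun μ => μ.im ≠ 0) ∘ (starRingEnd ℂ)) := by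
      apply Multiset.filter_congr
      intro μ _
      simp
    conv_lhs => rw [hTdef, hPcomp, ← Multiset.filter_map, hSconj]
  have hTnr : ∀ μ ∈ T, (starRingEnd ℂ) μ ≠ μ := by
    intro μ hμ hc
    have him := (Multiset.mem_filter.mp hμ).2
    exact him (Complex.conj_eq_iff_im.mp hc)
  -- main computation for each d
  intro d hd
  -- the complex determinant identity
  have hdetC : (algebraMap ℝ ℂ) ((f ^ d - 1).det) = (S.map (fun μ => μ ^ d - 1)).prod := by
    have h1 : (algebraMap ℝ ℂ) ((f ^ d - 1).det) = ((f ^ d - 1).map (algebraMap ℝ ℂ)).det :=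
      RingHom.map_det (algebraMap ℝ ℂ) _
    have h2 : (f ^ d - 1).map (algebraMap ℝ ℂ) = g ^ d - 1 := by
      rw [hgdef]
      have h3 := ((algebraMap ℝ ℂ).mapMatrix (m := Fin N)).map_sub (f ^ d) 1
      have h4 := ((algebraMap ℝ ℂ).mapMatrix (m := Fin N)).map_pow f d
      have h5 := ((algebraMap ℝ ℂ).mapMatrix (m := Fin N)).map_one
      simp only [RingHom.mapMatrix_apply] at h3 h4 h5
      rw [h3, h4, h5]
    rw [h1, h2, aux_det_pow_sub_one g d hd]
  have hdetne : (algebraMap ℝ ℂ) ((f ^ d - 1).det) ≠ 0 := by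
    simpa using hinv d hd
  have hfacne : ∀ μ ∈ S, μ ^ d - 1 ≠ 0 := by
    intro μ hμ h0
    apply hdetne
    rw [hdetC]
    exact Multiset.prod_eq_zero (by rw [← h0]; exact Multiset.mem_map_of_mem _ hμ)
  -- the non-real part is a positive real
  obtain ⟨c, hc, hcprod⟩ := aux_conj_prod (fun μ => μ ^ d - 1)
    (by intro μ; simp) (Multiset.card T) T rfl hTconj hTnr
    (fun μ hμ => hfacne μ (Multiset.mem_of_mem_filter hμ))
  -- the real factorization
  set P : ℝ := (f.charpoly.roots.map (fun x => x ^ d - 1)).prod with hPdef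
  have hRprod : (R.map (fun μ => μ ^ d - 1)).prod = (algebraMap ℝ ℂ) P := by
    rw [hPdef, ← Multiset.prod_hom _ (algebraMap ℝ ℂ), hRdef,
      Multiset.map_map, Multiset.map_map]
    apply congr_arg
    apply Multiset.map_congr rfl
    intro x _
    simp
  have hdetP : (f ^ d - 1).det = P * c := by
    apply hofinj
    calc (algebraMap ℝ ℂ) ((f ^ d - 1).det)
        = (S.map (fun μ => μ ^ d - 1)).prod := hdetC
      _ = (R.map (fun μ => μ ^ d - 1)).prod * (T.map (fun μ => μ ^ d - 1)).prod := by
          rw [hdecomp, Multiset.map_add, Multiset.prod_add]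
      _ = (algebraMap ℝ ℂ) P * (c : ℂ) := by rw [hRprod, hcprod]
      _ = (algebraMap ℝ ℂ) (P * c) := by
          rw [_root_.map_mul, Complex.coe_algebraMap]
  -- the real factors are nonzero
  have hrfacne : ∀ x ∈ f.charpoly.roots, (x : ℝ) ^ d - 1 ≠ 0 := by
    intro x hx h0
    have hxS : (algebraMap ℝ ℂ) x ∈ S := by
      rw [hdecomp]
      refine Multiset.mem_add.mpr (Or.inl ?_)
      rw [hRdef]
      exact Multiset.mem_map_of_mem _ hx
    apply hfacne _ hxS
    have : ((algebraMap ℝ ℂ) x) ^ d - 1 = (algebraMap ℝ ℂ) (x ^ d - 1) := by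
      simp
    rw [this, h0, map_zero]
  constructor
  · -- odd case
    intro hodd
    rw [hm₁]
    apply aux_sign_eq
    rw [hdetP, ← mul_assoc]
    apply mul_pos _ hc
    apply aux_pos_prod (fun x => x < 1) (fun x => x ^ d - 1)
    intro x hx
    by_cases hlt : x < 1
    · rw [if_pos hlt]
      have : x ^ d < 1 ^ d := hodd.strictMono_pow hlt
      simp only [one_pow] at this
      linarith
    · rw [if_neg hlt]
      have h1 : 1 < x := lt_of_le_of_ne (not_lt.mp hlt) (Ne.symm (havoid x hx).1)
      have : 1 ^ d < x ^ d := hodd.strictMono_pow h1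
      simp only [one_pow] at this
      linarith
  · -- even case
    intro heven
    rw [hm₂]
    apply aux_sign_eq
    rw [hdetP, ← mul_assoc]
    apply mul_pos _ hc
    apply aux_pos_prod (fun x => -1 < x ∧ x < 1) (fun x => x ^ d - 1)
    intro x hx
    by_cases hcond : -1 < x ∧ x < 1
    · rw [if_pos hcond]
      have habs : |x| < 1 := abs_lt.mpr hcond
      have : x ^ d < 1 := by
        calc x ^ d = |x| ^ d := (heven.pow_abs x).symm
          _ < 1 := pow_lt_one₀ (abs_nonneg x) habs hd.ne'
      linarith
    · rw [if_neg hcond]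
      have habs : 1 < |x| := by
        rcases havoid x hx with ⟨h1, h2⟩
        rcases lt_trichotomy (|x|) 1 with h | h | h
        · exact absurd (abs_lt.mp h) (by simpa using hcond)
        · rcases (abs_eq (by norm_num : (0:ℝ) ≤ 1)).mp h with hh | hh
          · exact absurd hh h1
          · exact absurd hh h2
        · exact h
      have : 1 < x ^ d := by
        calc (1:ℝ) < |x| ^ d := one_lt_pow₀ habs hd.ne'
          _ = x ^ d := heven.pow_abs x
      linarith
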